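/- arXiv:1601.07205 — 2 statements merged into one kernel-verified Lean document; each statement's English description precedes it below -/
import Mathlib

section
/- Let n ≥ 1 be an integer and let 0 < r < 1. For each integer M with 1 ≤ M < r^{-n}, there exist a set Q ⊆ ℝⁿ which is a product of n bounded open intervals and M orientation-preserving contracting similarities f₁,…,f_M of ℝⁿ, each with scaling ratio r, such that fᵢ(closure Q) ⊆ Q for every i and the sets fᵢ(closure Q), i = 1,…,M, are pairwise disjoint. -/
open Set Metric Filter MeasureTheory
open scoped ENNReal Topology NNReal

noncomputable section

/-- `L_Φ(x,r) = sup {|Φ(x) - Φ(y)| : y ∈ Ω, |x - y| ≤ r}`. -/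
noncomputable def linDil {X : Type*} [MetricSpace X] (Ω : Set X) (Φ : X → X) (x : X) (r : ℝ) :
    ℝ≥0∞ :=
  ⨆ y ∈ {y | y ∈ Ω ∧ dist x y ≤ r}, edist (Φ x) (Φ y)

/-- `l_Φ(x,r) = inf {|Φ(x) - Φ(y)| : y ∈ Ω, |x - y| ≥ r}`. -/
noncomputable def linCon {X : Type*} [MetricSpace X] (Ω : Set X) (Φ : X → X) (x : X) (r : ℝ) :
    ℝ≥0∞ :=
  ⨅ y ∈ {y | y ∈ Ω ∧ r ≤ dist x y}, edist (Φ x) (Φ y)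

/-- `H_Φ(x) = limsup_{r → 0⁺} L_Φ(x,r) / l_Φ(x,r)`. -/
noncomputable def qcH {X : Type*} [MetricSpace X] (Ω : Set X) (Φ : X → X) (x : X) : ℝ≥0∞ :=
  Filter.limsup (fun r : ℝ => linDil Ω Φ x r / linCon Ω Φ x r) (𝓝[>] (0 : ℝ))

/-- A map `Φ`, viewed as a map of `Ω` into `X`, is quasiconformal if `H_Φ(x) ≤ H` for all
`x ∈ Ω`, for some finite `H ≥ 1`. -/
def QuasiconformalOn {X : Type*} [MetricSpace X] (Ω : Set X) (Φ : X → X) : Prop :=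
  ∃ H : ℝ, 1 ≤ H ∧ ∀ x ∈ Ω, qcH Ω Φ x ≤ ENNReal.ofReal H

/-- `Φ` restricts to a homeomorphism of `Ω` onto `Ω'`. -/
def IsHomeoOn {X : Type*} [TopologicalSpace X] (Φ : X → X) (Ω Ω' : Set X) : Prop :=
  ∃ e : Ω ≃ₜ Ω', ∀ x : Ω, (e x : X) = Φ (x : X)

/-- `f` is a similarity with ratio `r`. -/
def IsSimilarityWith {X : Type*} [MetricSpace X] (r : ℝ) (f : X → X) : Prop :=
  0 < r ∧ ∀ x y, dist (f x) (f y) = r * dist x y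

/-- The strong separation condition for the iterated function system `f` on the set `Q`:
each `f i` maps the closure of `Q` into `Q`, and the images of the closure of `Q` are
pairwise disjoint. -/
def StrongSeparation {X : Type*} [MetricSpace X] {ι : Type*} (f : ι → X → X) (Q : Set X) :
    Prop :=
  (∀ i, f i '' closure Q ⊆ Q) ∧
    ∀ i j, i ≠ j → Disjoint (f i '' closure Q) (f j '' closure Q)

/-- `f_σ = f_{σ₁} ∘ ⋯ ∘ f_{σ_k}` for a finite word `σ`. -/
def iterComp {X ι : Type*} (f : ι → X → X) : List ι → X → X
  | [] => id
  | i :: w => f i ∘ iterComp f w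

/-- The invariant set `K = ⋂_k ⋃_{|σ| = k} f_σ(closure Q)` of an iterated function system. -/
def invariantSet {X : Type*} [MetricSpace X] {ι : Type*} (f : ι → X → X) (Q : Set X) :
    Set X :=
  ⋂ k : ℕ, ⋃ w : Fin k → ι, iterComp f (List.ofFn w) '' closure Q

/-- The distance between two subsets of a metric space. -/
noncomputable def setDist {X : Type*} [MetricSpace X] (A B : Set X) : ℝ :=
  sInf ((fun p : X × X => dist p.1 p.2) '' A ×ˢ B)

end

/-- A map of `ℝⁿ` is an orientation-preserving similarity with ratio `r > 0` if it has the
form `x ↦ r • A x + v` for a linear isometry `A` with `det A = 1` and a vector `v`. -/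
def IsOrientationPreservingSimilarityWith {n : ℕ} (r : ℝ)
    (f : EuclideanSpace ℝ (Fin n) → EuclideanSpace ℝ (Fin n)) : Prop :=
  0 < r ∧ ∃ (A : EuclideanSpace ℝ (Fin n) ≃ₗᵢ[ℝ] EuclideanSpace ℝ (Fin n))
    (v : EuclideanSpace ℝ (Fin n)),
      LinearMap.det (A.toLinearEquiv :
        EuclideanSpace ℝ (Fin n) →ₗ[ℝ] EuclideanSpace ℝ (Fin n)) = 1 ∧
      ∀ x, f x = r • A x + v

noncomputable def sPerm {n : ℕ} (d : Fin n → ℝ) (σ : Equiv.Perm (Fin n))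
    (hd : ∀ j, d j * d j = 1) :
    EuclideanSpace ℝ (Fin n) ≃ₗᵢ[ℝ] EuclideanSpace ℝ (Fin n) :=
  { toFun := fun x => WithLp.toLp 2 (fun j => d j * x (σ j))
    invFun := fun x => WithLp.toLp 2 (fun j => d (σ.symm j) * x (σ.symm j))
    map_add' := by intro x y; ext j; simp [PiLp.add_apply, mul_add]
    map_smul' := by intro c x; ext j; simp [PiLp.smul_apply]; ring
    left_inv := by
      intro x; ext j
      show d (σ.symm j) * (d (σ.symm j) * x (σ (σ.symm j))) = x j
      rw [Equiv.apply_symm_apply, ← mul_assoc, hd, one_mul]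
    right_inv := by
      intro x; ext j
      show d j * (d (σ.symm (σ j)) * x (σ.symm (σ j))) = x j
      rw [Equiv.symm_apply_apply, ← mul_assoc, hd, one_mul]
    norm_map' := by
      intro x
      rw [EuclideanSpace.norm_eq, EuclideanSpace.norm_eq]
      congr 1
      rw [← Equiv.sum_comp σ (fun i => ‖x i‖ ^ 2)]
      refine Finset.sum_congr rfl fun j _ => ?_
      have h1 : ‖d j‖ ^ 2 = 1 := by rw [Real.norm_eq_abs, sq_abs, sq, hd j]
      show ‖d j * x (σ j)‖ ^ 2 = ‖x (σ j)‖ ^ 2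
      rw [norm_mul, mul_pow, h1, one_mul] }

@[simp] lemma sPerm_apply {n : ℕ} (d : Fin n → ℝ) (σ : Equiv.Perm (Fin n))
    (hd : ∀ j, d j * d j = 1) (x : EuclideanSpace ℝ (Fin n)) (j : Fin n) :
    sPerm d σ hd x j = d j * x (σ j) := rfl

lemma sPerm_det {n : ℕ} (d : Fin n → ℝ) (σ : Equiv.Perm (Fin n))
    (hd : ∀ j, d j * d j = 1) :
    LinearMap.det ((sPerm d σ hd).toLinearEquiv :
        EuclideanSpace ℝ (Fin n) →ₗ[ℝ] EuclideanSpace ℝ (Fin n)) =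
      (∏ j, d j) * ((Equiv.Perm.sign σ : ℤ) : ℝ) := by
  classical
  set b := (EuclideanSpace.basisFun (Fin n) ℝ).toBasis with hb
  rw [← LinearMap.det_toMatrix b]
  have hmat : LinearMap.toMatrix b b ((sPerm d σ hd).toLinearEquiv :
      EuclideanSpace ℝ (Fin n) →ₗ[ℝ] EuclideanSpace ℝ (Fin n)) =
      Matrix.diagonal d * (σ.permMatrix ℝ) := by
    ext k i
    rw [LinearMap.toMatrix_apply]
    simp [hb, sPerm_apply, EuclideanSpace.basisFun_repr, EuclideanSpace.single_apply,
      Matrix.diagonal_mul, Equiv.Perm.permMatrix, PEquiv.toMatrix_apply,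
      Equiv.toPEquiv_apply]
  rw [hmat, Matrix.det_mul, Matrix.det_diagonal, Matrix.det_permutation]

/-- **Almost full packings.** Let `n ≥ 1` and `0 < r < 1`. For each integer `1 ≤ M < r⁻ⁿ`
there are a product `Q` of `n` bounded open intervals and an iterated function system of
`M` orientation-preserving contracting similarities of `ℝⁿ`, each of scaling ratio `r`,
satisfying the strong separation condition on `Q`. -/
theorem packing_similarities
    (n : ℕ) (hn : 1 ≤ n) (r : ℝ) (hr₀ : 0 < r) (hr₁ : r < 1)
    (M : ℕ) (hM₁ : 1 ≤ M) (hM₂ : (M : ℝ) < r ^ (-(n : ℤ))) :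
    ∃ (a b : Fin n → ℝ) (Q : Set (EuclideanSpace ℝ (Fin n)))
      (f : Fin M → EuclideanSpace ℝ (Fin n) → EuclideanSpace ℝ (Fin n)),
      (∀ i, a i < b i) ∧
      Q = {x : EuclideanSpace ℝ (Fin n) | ∀ i, x i ∈ Set.Ioo (a i) (b i)} ∧
      (∀ i, IsOrientationPreservingSimilarityWith r (f i)) ∧
      (∀ i, IsSimilarityWith r (f i)) ∧
      StrongSeparation f Q := by
  obtain ⟨m, rfl⟩ : ∃ m, n = m + 1 := ⟨n - 1, (Nat.succ_pred_eq_of_pos hn).symm⟩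
  -- basic numerics
  have hMrn : (M : ℝ) * r ^ (m + 1) < 1 := by
    have h0 : (0:ℝ) < r ^ (m+1) := pow_pos hr₀ _
    have hz : r ^ (-((m+1 : ℕ) : ℤ)) = (r ^ (m+1))⁻¹ := by
      rw [zpow_neg, zpow_natCast]
    rw [hz] at hM₂
    calc (M:ℝ) * r^(m+1) < (r^(m+1))⁻¹ * r^(m+1) :=
          mul_lt_mul_of_pos_right hM₂ h0
      _ = 1 := inv_mul_cancel₀ h0.ne'
  obtain ⟨s, hMs, hs1, hrs⟩ : ∃ s : ℝ, (M:ℝ) * (r * s ^ m) < 1 ∧ s < 1 ∧ r < s := by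
    have hc : Filter.Tendsto (fun s : ℝ => (M:ℝ) * (r * s ^ m)) (nhdsWithin r (Set.Ioi r))
        (nhds ((M:ℝ) * (r * r ^ m))) :=
      ((continuous_const.mul (continuous_const.mul (continuous_pow m))).tendsto r).mono_left
        nhdsWithin_le_nhds
    have h1 : ∀ᶠ s in nhdsWithin r (Set.Ioi r), (M:ℝ) * (r * s ^ m) < 1 := by
      apply hc.eventually_lt_const
      calc (M:ℝ)*(r*r^m) = (M:ℝ)*r^(m+1) := by ring
        _ < 1 := hMrn
    have h2 : ∀ᶠ s in nhdsWithin r (Set.Ioi r), s < 1 :=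
      Filter.Eventually.filter_mono nhdsWithin_le_nhds (eventually_lt_nhds hr₁)
    have h3 : ∀ᶠ s in nhdsWithin r (Set.Ioi r), r < s := eventually_mem_nhdsWithin
    exact ((h1.and (h2.and h3)).exists).imp fun s hs => ⟨hs.1, hs.2.1, hs.2.2⟩
  have hs0 : 0 < s := hr₀.trans hrs
  set u : ℝ := r * s ^ m with hu
  have hu0 : 0 < u := mul_pos hr₀ (pow_pos hs0 m)
  have hMu : (M:ℝ) * u < 1 := hMs
  have hM1R : (1:ℝ) ≤ (M:ℝ) := by exact_mod_cast hM₁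
  have hMpos : (0:ℝ) < (M:ℝ) + 1 := by positivity
  set h : ℝ := (1 + u) / ((M:ℝ) + 1) with hh
  have hh0 : 0 < h := by positivity
  have huh : u < h := by
    rw [hh, lt_div_iff₀ hMpos]; nlinarith
  have hbound : ((M:ℝ) - 1) * h + u < 1 := by
    have he : ((M:ℝ)-1)*h + u = (((M:ℝ)-1)*(1+u) + u*((M:ℝ)+1))/((M:ℝ)+1) := by
      rw [hh]; field_simp
    rw [he, div_lt_one hMpos]; nlinarith
  -- the isometry
  set σ : Equiv.Perm (Fin (m+1)) := (finRotate (m+1)).symm with hσ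
  set d : Fin (m+1) → ℝ := fun j => if j = 0 then (-1:ℝ)^m else 1 with hd
  have hdd : ∀ j, d j * d j = 1 := by
    intro j; by_cases hj : j = 0
    · simp only [hd, if_pos hj, ← pow_add]; exact Even.neg_one_pow ⟨m, rfl⟩
    · simp [hd, hj]
  set A := sPerm d σ hdd with hA
  have hdet : LinearMap.det (A.toLinearEquiv :
      EuclideanSpace ℝ (Fin (m+1)) →ₗ[ℝ] EuclideanSpace ℝ (Fin (m+1))) = 1 := by
    rw [hA, sPerm_det]
    have h1 : (∏ j, d j) = (-1:ℝ)^m := by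
      simp [hd, Finset.prod_ite_eq']
    have h2 : Equiv.Perm.sign σ = (-1)^m := by
      have : σ = (finRotate (m+1))⁻¹ := rfl
      rw [this, Equiv.Perm.sign_inv, sign_finRotate, Nat.add_sub_cancel]
    rw [h1, h2]
    push_cast
    rw [← pow_add]; exact Even.neg_one_pow ⟨m, rfl⟩
  -- data
  set t : Fin M → ℝ := fun i => (2*((i:ℕ):ℝ) + 1 - M) * h with ht
  set v : Fin M → EuclideanSpace ℝ (Fin (m+1)) :=
    fun i => t i • EuclideanSpace.single (0 : Fin (m+1)) (1:ℝ) with hv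
  set f : Fin M → EuclideanSpace ℝ (Fin (m+1)) → EuclideanSpace ℝ (Fin (m+1)) :=
    fun i x => r • (A x) + v i with hf
  set a : Fin (m+1) → ℝ := fun j => -(s ^ (j:ℕ)) with ha
  set b : Fin (m+1) → ℝ := fun j => s ^ (j:ℕ) with hb
  set Q : Set (EuclideanSpace ℝ (Fin (m+1))) :=
    {x | ∀ i, x i ∈ Set.Ioo (a i) (b i)} with hQ
  -- coordinate formula
  have hfc : ∀ (i : Fin M) (x : EuclideanSpace ℝ (Fin (m+1))) (j : Fin (m+1)),
      f i x j = r * (d j * x (σ j)) + (if j = 0 then t i else 0) := by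
    intro i x j
    have hAx : A x j = d j * x (σ j) := rfl
    show (r • (A x) + v i) j = _
    rw [PiLp.add_apply, PiLp.smul_apply, hv]
    simp only [PiLp.smul_apply, EuclideanSpace.single_apply, smul_eq_mul, hAx]
    by_cases hj : j = 0 <;> simp [hj]
  -- the enclosing closed box
  set K : Set (EuclideanSpace ℝ (Fin (m+1))) :=
    {x | ∀ j : Fin (m+1), |x j| ≤ s ^ (j:ℕ)} with hK
  have hKclosed : IsClosed K := by
    have : K = ⋂ j : Fin (m+1),
        (fun x : EuclideanSpace ℝ (Fin (m+1)) => x j) ⁻¹'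
          (Set.Icc (-(s ^ (j:ℕ))) (s ^ (j:ℕ))) := by
      ext x; simp [hK, abs_le, Set.mem_iInter, Set.mem_Icc, neg_le]
    rw [this]
    exact isClosed_iInter fun j =>
      IsClosed.preimage (EuclideanSpace.proj j).continuous isClosed_Icc
  have hQK : Q ⊆ K := by
    intro x hx j
    have := hx j
    rw [Set.mem_Ioo] at this
    rw [abs_le]
    constructor
    · have := this.1; simp only [ha] at this; linarith
    · exact this.2.le
  have hclQ : closure Q ⊆ K := closure_minimal hQK hKclosed
  -- σ values
  have hσ0 : σ (0 : Fin (m+1)) = Fin.last m := by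
    rw [hσ, Equiv.symm_apply_eq]; exact finRotate_last.symm
  have hσsucc : ∀ i0 : Fin m, σ (Fin.succ i0) = Fin.castSucc i0 := by
    intro i0
    rw [hσ, Equiv.symm_apply_eq, finRotate_succ_apply, Fin.coeSucc_eq_succ]
  have hd0 : |d (0 : Fin (m+1))| = 1 := by
    simp [hd, abs_pow]
  have hti : ∀ i : Fin M, |t i| ≤ ((M:ℝ) - 1) * h := by
    intro i
    have h1 : (0:ℝ) ≤ ((i:ℕ):ℝ) := Nat.cast_nonneg _
    have h2 : ((i:ℕ):ℝ) + 1 ≤ (M:ℝ) := by exact_mod_cast i.isLt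
    rw [ht]
    rw [abs_mul, abs_of_pos hh0]
    apply mul_le_mul_of_nonneg_right _ hh0.le
    rw [abs_le]; constructor <;> linarith
  -- coordinate-0 bound for points of K
  have hcoord0 : ∀ (x : EuclideanSpace ℝ (Fin (m+1))), x ∈ K →
      |r * (d 0 * x (σ 0))| ≤ u := by
    intro x hx
    have hxb : |x (σ 0)| ≤ s ^ m := by
      have := hx (σ 0)
      rwa [hσ0, Fin.val_last] at this
    rw [abs_mul, abs_mul, hd0, one_mul, abs_of_pos hr₀, hu]
    exact mul_le_mul_of_nonneg_left hxb hr₀.le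
  -- images of K lie in Q
  have hsub : ∀ i, f i '' K ⊆ Q := by
    rintro i _ ⟨x, hx, rfl⟩ j
    rw [Set.mem_Ioo]
    induction j using Fin.cases with
    | zero =>
      have habs : |f i x 0| < 1 := by
        rw [hfc, if_pos rfl]
        calc |r * (d 0 * x (σ 0)) + t i| ≤ |r * (d 0 * x (σ 0))| + |t i| := abs_add_le _ _
          _ ≤ u + ((M:ℝ)-1)*h := add_le_add (hcoord0 x hx) (hti i)
          _ < 1 := by linarith
      have := abs_lt.1 habs
      constructor
      · simpa [ha] using this.1
      · simpa [hb] using this.2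
    | succ i0 =>
      have hne : Fin.succ i0 ≠ 0 := Fin.succ_ne_zero i0
      have hval : f i x (Fin.succ i0) = r * x (Fin.castSucc i0) := by
        rw [hfc, if_neg hne, hσsucc]
        have hd1 : d (Fin.succ i0) = 1 := by simp [hd, hne]
        rw [hd1]; ring
      have hxb : |x (Fin.castSucc i0)| ≤ s ^ (i0:ℕ) := by
        have := hx (Fin.castSucc i0)
        rwa [Fin.coe_castSucc] at this
      have habs : |f i x (Fin.succ i0)| < s ^ ((i0:ℕ) + 1) := by
        rw [hval, abs_mul, abs_of_pos hr₀]
        calc r * |x (Fin.castSucc i0)| ≤ r * s ^ (i0:ℕ) :=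
              mul_le_mul_of_nonneg_left hxb hr₀.le
          _ < s * s ^ (i0:ℕ) := mul_lt_mul_of_pos_right hrs (pow_pos hs0 _)
          _ = s ^ ((i0:ℕ) + 1) := by ring
      have := abs_lt.1 habs
      constructor
      · simpa [ha, Fin.val_succ] using this.1
      · simpa [hb, Fin.val_succ] using this.2
  refine ⟨a, b, Q, f, ?_, rfl, ?_, ?_, ?_, ?_⟩
  · intro j
    have := pow_pos hs0 (j:ℕ)
    simp only [ha, hb]; linarith
  · intro i
    exact ⟨hr₀, A, v i, hdet, fun x => rfl⟩
  · intro i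
    refine ⟨hr₀, fun x y => ?_⟩
    rw [dist_eq_norm, dist_eq_norm]
    have : f i x - f i y = r • A (x - y) := by
      show (r • A x + v i) - (r • A y + v i) = _
      rw [add_sub_add_right_eq_sub, ← smul_sub, ← map_sub]
    rw [this, norm_smul, A.norm_map, Real.norm_eq_abs, abs_of_pos hr₀]
  · intro i
    exact (Set.image_mono (f := f i) hclQ).trans (hsub i)
  · intro i i' hne
    rw [Set.disjoint_left]
    rintro z ⟨x, hx, rfl⟩ ⟨x', hx', heq⟩
    have hxK : x ∈ K := hclQ hx
    have hxK' : x' ∈ K := hclQ hx'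
    have h0 : f i' x' 0 = f i x 0 := by rw [heq]
    rw [hfc, hfc, if_pos rfl, if_pos rfl] at h0
    have b1 := abs_le.1 (hcoord0 x hxK)
    have b2 := abs_le.1 (hcoord0 x' hxK')
    have hge : 2 * h ≤ |t i - t i'| := by
      have he : t i - t i' = (((i:ℕ):ℝ) - ((i':ℕ):ℝ)) * (2 * h) := by
        rw [ht]; ring
      have h1 : (1:ℝ) ≤ |((i:ℕ):ℝ) - ((i':ℕ):ℝ)| := by
        have hne' : ((i:ℕ):ℤ) ≠ ((i':ℕ):ℤ) := by
          intro hc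
          exact hne (Fin.ext (by exact_mod_cast hc))
        have h2 : 1 ≤ |((i:ℕ):ℤ) - ((i':ℕ):ℤ)| := Int.one_le_abs (sub_ne_zero.2 hne')
        exact_mod_cast h2
      rw [he, abs_mul, abs_of_pos (by positivity : (0:ℝ) < 2 * h)]
      calc 2 * h = 1 * (2 * h) := (one_mul _).symm
        _ ≤ |((i:ℕ):ℝ) - ((i':ℕ):ℝ)| * (2 * h) :=
            mul_le_mul_of_nonneg_right h1 (by positivity)
    rcases abs_cases (t i - t i') with ⟨he2, _⟩ | ⟨he2, _⟩ <;>
      linarith [b1.1, b1.2, b2.1, b2.2]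
end

section
/- Let 𝓘 = {f₁,…,f_N} and 𝓙 = {g₁,…,g_N} be iterated function systems of contracting similarities of ℝⁿ satisfying the strong separation condition on bounded open sets Q and S respectively, let φ : ℝⁿ \ (⋃ᵢ fᵢ(Q)) → ℝⁿ \ (⋃ᵢ gᵢ(S)) be an H-quasiconformal homeomorphism satisfying the compatibility condition, and let Φ : ℝⁿ → ℝⁿ be the generated homeomorphism (so that Φ = φ off ⋃ᵢ fᵢ(Q), and Φ ∘ f_σ = g_σ ∘ φ ∘ (f_σ)^{-1} ∘ f_σ on each cell f_σ(closure Q) \ ⋃ᵢ f_{σ i}(Q)). Set d = (1/2)·dist(⋃ᵢ fᵢ(closure Q), ℝⁿ \ Q), δ = (1/2)·dist(⋃ᵢ gᵢ(closure S), ℝⁿ \ S), let t_max = maxᵢ (ratio of fᵢ), τ_min = minᵢ (ratio of gᵢ), and let κ ≥ 1 be an integer with t_max^{κ−1} < d/(2 diam Q). Then for every point x of the invariant set K_𝓘, H_Φ(x) ≤ 2 (diam S)/(τ_min^{1+κ} δ). -/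
open Set Metric Filter MeasureTheory
open scoped ENNReal Topology NNReal

set_option linter.unusedSectionVars false
set_option maxHeartbeats 1000000

section SimHelpers

variable {X : Type*} [NormedAddCommGroup X] [InnerProductSpace ℝ X] [FiniteDimensional ℝ X]

lemma sim_injective {r : ℝ} {f : X → X} (h : IsSimilarityWith r f) :
    Function.Injective f := by
  intro a b hab
  have h2 := h.2 a b
  rw [hab, dist_self] at h2
  have hd : dist a b = 0 := by
    have hr := h.1
    nlinarith [dist_nonneg (x := a) (y := b)]
  exact dist_eq_zero.mp hd

lemma sim_continuous {r : ℝ} {f : X → X} (h : IsSimilarityWith r f) :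
    Continuous f := by
  have : LipschitzWith (Real.toNNReal r) f := by
    apply LipschitzWith.of_dist_le_mul
    intro x y
    rw [h.2 x y, Real.coe_toNNReal r h.1.le]
  exact this.continuous

lemma sim_surjective {r : ℝ} {f : X → X} (h : IsSimilarityWith r f) :
    Function.Surjective f := by
  have hr := h.1
  have hdist : ∀ x y : X, dist (r⁻¹ • f x) (r⁻¹ • f y) = dist x y := by
    intro x y
    rw [dist_smul₀, h.2, norm_inv, Real.norm_of_nonneg hr.le]
    field_simp
  have hiso : Isometry (fun x : X => r⁻¹ • f x) := Isometry.of_dist_eq hdist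
  set A := hiso.affineIsometryOfStrictConvexSpace with hA
  have hAcoe : ∀ x, A x = r⁻¹ • f x := fun x => rfl
  have hLsurj : Function.Surjective A.linearIsometry.toLinearMap :=
    LinearMap.injective_iff_surjective.mp A.linearIsometry.injective
  intro w
  obtain ⟨v, hv⟩ := hLsurj (r⁻¹ • w - A 0)
  have hdecomp : A v = A.toAffineMap.linear v + A 0 := by
    have h1 := A.toAffineMap.decomp
    have h2 := congrFun h1 v
    simpa using h2
  have hlin : (A.toAffineMap.linear : X → X) = A.linearIsometry.toLinearMap := by
    rw [A.linear_eq_linearIsometry]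
  have hAv : A v = r⁻¹ • w := by
    rw [hdecomp]
    rw [show A.toAffineMap.linear v = A.linearIsometry.toLinearMap v from congrFun hlin v, hv]
    abel
  refine ⟨v, ?_⟩
  have hfv : r⁻¹ • f v = r⁻¹ • w := by rw [← hAcoe v, hAv]
  calc f v = r • r⁻¹ • f v := (smul_inv_smul₀ (ne_of_gt hr) _).symm
    _ = r • r⁻¹ • w := by rw [hfv]
    _ = w := smul_inv_smul₀ (ne_of_gt hr) _

noncomputable def simHomeo {r : ℝ} {f : X → X} (h : IsSimilarityWith r f) : X ≃ₜ X where
  toEquiv := Equiv.ofBijective f ⟨sim_injective h, sim_surjective h⟩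
  continuous_toFun := sim_continuous h
  continuous_invFun := by
    have hr := h.1
    have hl : LipschitzWith (Real.toNNReal r⁻¹)
        (Equiv.ofBijective f ⟨sim_injective h, sim_surjective h⟩).symm := by
      apply LipschitzWith.of_dist_le_mul
      intro a b
      set e := Equiv.ofBijective f ⟨sim_injective h, sim_surjective h⟩
      have ha : f (e.symm a) = a := e.apply_symm_apply a
      have hb : f (e.symm b) = b := e.apply_symm_apply b
      have h2 := h.2 (e.symm a) (e.symm b)
      rw [ha, hb] at h2
      rw [Real.coe_toNNReal _ (inv_nonneg.mpr hr.le), h2]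
      field_simp
      exact le_rfl
    exact hl.continuous

@[simp] lemma simHomeo_coe {r : ℝ} {f : X → X} (h : IsSimilarityWith r f) :
    ⇑(simHomeo h) = f := rfl

end SimHelpers

section IterHelpers

variable {X : Type*} [MetricSpace X] {N : ℕ} {f : Fin N → X → X} {rf : Fin N → ℝ}
  {Q : Set X}

lemma iterComp_append (f : Fin N → X → X) (u v : List (Fin N)) :
    iterComp f (u ++ v) = iterComp f u ∘ iterComp f v := by
  induction u with
  | nil => rfl
  | cons i u ih => simp [iterComp, ih, Function.comp_assoc]

lemma iterComp_singleton (f : Fin N → X → X) (i : Fin N) :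
    iterComp f [i] = f i := by
  funext z; simp [iterComp]

lemma iter_similarity (hf : ∀ i, IsSimilarityWith (rf i) (f i)) :
    ∀ w : List (Fin N), IsSimilarityWith ((w.map rf).prod) (iterComp f w) := by
  intro w
  induction w with
  | nil => exact ⟨one_pos, by simp [iterComp]⟩
  | cons i w ih =>
    refine ⟨by simpa using mul_pos (hf i).1 ih.1, ?_⟩
    intro x y
    simp only [iterComp, Function.comp_apply, List.map_cons, List.prod_cons]
    rw [(hf i).2, ih.2, mul_assoc]

lemma cell_subset (hsep : ∀ i, f i '' closure Q ⊆ Q) :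
    ∀ w : List (Fin N), iterComp f w '' closure Q ⊆ closure Q := by
  intro w
  induction w with
  | nil => simp [iterComp]
  | cons i w ih =>
    intro z hz
    obtain ⟨a, ha, rfl⟩ := hz
    have h1 : iterComp f w a ∈ closure Q := ih ⟨a, ha, rfl⟩
    exact subset_closure (hsep i ⟨iterComp f w a, h1, rfl⟩)

lemma cell_take_coherence (hf : ∀ i, IsSimilarityWith (rf i) (f i))
    (hsepQ : StrongSeparation f Q) :
    ∀ (u : List (Fin N)) (x : X) (v : List (Fin N)), x ∈ iterComp f u '' closure Q →
      x ∈ iterComp f v '' closure Q → u.length ≤ v.length → u = v.take u.length := by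
  intro u
  induction u with
  | nil => intro x v _ _ _; simp
  | cons i u ih =>
    intro x v hu hv hlen
    match v with
    | [] => simp at hlen
    | j :: v =>
      have hxi : x ∈ f i '' (iterComp f u '' closure Q) := by
        rw [show iterComp f (i :: u) = f i ∘ iterComp f u from rfl, image_comp] at hu
        exact hu
      have hxj : x ∈ f j '' (iterComp f v '' closure Q) := by
        rw [show iterComp f (j :: v) = f j ∘ iterComp f v from rfl, image_comp] at hv
        exact hv
      have hij : i = j := by
        by_contra hne
        have h1 : x ∈ f i '' closure Q :=
          image_mono (f := f i) (cell_subset hsepQ.1 u) hxi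
        have h2 : x ∈ f j '' closure Q :=
          image_mono (f := f j) (cell_subset hsepQ.1 v) hxj
        exact Set.disjoint_left.mp (hsepQ.2 i j hne) h1 h2
      subst hij
      obtain ⟨a, ha, hax⟩ := hxi
      obtain ⟨b, hb, hbx⟩ := hxj
      have hinj : Function.Injective (f i) := by
        intro p q hpq
        have h2 := (hf i).2 p q
        rw [hpq, dist_self] at h2
        have hd : dist p q = 0 := by nlinarith [dist_nonneg (x := p) (y := q), (hf i).1]
        exact dist_eq_zero.mp hd
      have hab : a = b := hinj (by rw [hax, hbx])
      subst hab
      have h3 := ih a v ha hb (by simpa using hlen)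
      simp only [List.length_cons, List.take_succ_cons]
      rw [← h3]

lemma list_prod_nonneg' (h0 : ∀ i, 0 ≤ rf i) (w : List (Fin N)) :
    0 ≤ (w.map rf).prod := by
  induction w with
  | nil => simp
  | cons i w ih => simpa using mul_nonneg (h0 i) ih

lemma list_prod_le_pow {c : ℝ} (hc : ∀ i, rf i ≤ c) (h0 : ∀ i, 0 ≤ rf i)
    (w : List (Fin N)) : (w.map rf).prod ≤ c ^ w.length := by
  induction w with
  | nil => simp
  | cons i w ih =>
    simp only [List.map_cons, List.prod_cons, List.length_cons, pow_succ]
    rw [mul_comm (c ^ w.length) c]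
    exact mul_le_mul (hc i) ih (list_prod_nonneg' h0 w) (le_trans (h0 i) (hc i))

lemma pow_le_list_prod {c : ℝ} (hc : ∀ i, c ≤ rf i) (h0 : 0 ≤ c)
    (w : List (Fin N)) : c ^ w.length ≤ (w.map rf).prod := by
  induction w with
  | nil => simp
  | cons i w ih =>
    simp only [List.map_cons, List.prod_cons, List.length_cons, pow_succ]
    rw [mul_comm (c ^ w.length) c]
    exact mul_le_mul (hc i) ih (pow_nonneg h0 _) (le_trans h0 (hc i))

end IterHelpers

section DistHelpers

variable {X : Type*} [MetricSpace X]

lemma setDist_le_dist {A B : Set X} {a b : X} (ha : a ∈ A) (hb : b ∈ B) :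
    setDist A B ≤ dist a b := by
  apply csInf_le
  · refine ⟨0, ?_⟩
    rintro z ⟨⟨p, q⟩, _, rfl⟩
    exact dist_nonneg
  · exact ⟨(a, b), ⟨ha, hb⟩, rfl⟩

lemma le_setDist {A B : Set X} {c : ℝ} (hne : (A ×ˢ B).Nonempty)
    (h : ∀ a ∈ A, ∀ b ∈ B, c ≤ dist a b) : c ≤ setDist A B := by
  apply le_csInf (hne.image _)
  rintro z ⟨⟨p, q⟩, ⟨hp, hq⟩, rfl⟩
  exact h p hp q hq

lemma compact_closed_gap {A B : Set X} (hA : IsCompact A) (hAne : A.Nonempty)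
    (hB : IsClosed B) (hdisj : Disjoint A B) :
    ∃ c : ℝ, 0 < c ∧ ∀ a ∈ A, ∀ b ∈ B, c ≤ dist a b := by
  rcases B.eq_empty_or_nonempty with rfl | hBne
  · exact ⟨1, one_pos, by simp⟩
  obtain ⟨a₀, ha₀, hmin⟩ := hA.exists_isMinOn hAne (continuous_infDist_pt B).continuousOn
  refine ⟨infDist a₀ B, ?_, ?_⟩
  · exact (hB.notMem_iff_infDist_pos hBne).mp (Set.disjoint_left.mp hdisj ha₀)
  · intro a ha b hb
    exact le_trans (hmin ha) (infDist_le_dist_of_mem hb)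

end DistHelpers

/-- **Dilatation bound on the invariant set.** Let `𝓘 = {f i}`, `𝓙 = {g i}` be iterated
function systems of contracting similarities of `ℝⁿ` with the strong separation condition
on bounded open sets `Q`, `S`, let `φ` be an `H`-quasiconformal homeomorphism of
`ℝⁿ \ ⋃ᵢ fᵢ(Q)` onto `ℝⁿ \ ⋃ᵢ gᵢ(S)` satisfying the compatibility condition, and let
`Φ : ℝⁿ → ℝⁿ` be the generated homeomorphism. With `d`, `δ`, `t_max`, `τ_min`, `κ` as in
the statement, `H_Φ(x) ≤ 2 diam S / (τ_min^{1+κ} δ)` for every `x ∈ K_𝓘`. -/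
theorem generated_map_dilatation_on_invariant_set
    (n N : ℕ)
    (f g : Fin N → EuclideanSpace ℝ (Fin n) → EuclideanSpace ℝ (Fin n))
    (rf rg : Fin N → ℝ)
    (hf : ∀ i, IsSimilarityWith (rf i) (f i)) (hrf : ∀ i, rf i < 1)
    (hg : ∀ i, IsSimilarityWith (rg i) (g i)) (hrg : ∀ i, rg i < 1)
    (Q S : Set (EuclideanSpace ℝ (Fin n)))
    (hQo : IsOpen Q) (hQb : Bornology.IsBounded Q)
    (hSo : IsOpen S) (hSb : Bornology.IsBounded S)
    (hsepQ : StrongSeparation f Q) (hsepS : StrongSeparation g S)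
    (φ : EuclideanSpace ℝ (Fin n) → EuclideanSpace ℝ (Fin n)) (H : ℝ) (hH : 1 ≤ H)
    (hφ_homeo : IsHomeoOn φ (⋃ i, f i '' Q)ᶜ (⋃ i, g i '' S)ᶜ)
    (hφ_qc : ∀ x ∈ (⋃ i, f i '' Q)ᶜ, qcH (⋃ i, f i '' Q)ᶜ φ x ≤ ENNReal.ofReal H)
    (hφ_compat : ∃ ε > 0, ∀ y ∉ Q, Metric.infDist y Q ≤ ε →
      ∀ i, φ (f i y) = g i (φ y))
    (Φ : EuclideanSpace ℝ (Fin n) ≃ₜ EuclideanSpace ℝ (Fin n))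
    (hΦ_out : ∀ x ∈ (⋃ i, f i '' Q)ᶜ, Φ x = φ x)
    (hΦ_cell : ∀ w : List (Fin N), ∀ x ∈ closure Q \ ⋃ i, f i '' Q,
      Φ (iterComp f w x) = iterComp g w (φ x))
    (d δ : ℝ)
    (hd : d = (1 / 2) * setDist (⋃ i, f i '' closure Q) Qᶜ)
    (hδ : δ = (1 / 2) * setDist (⋃ i, g i '' closure S) Sᶜ)
    (tmax τmin : ℝ)
    (htmax : IsGreatest (Set.range rf) tmax)
    (hτmin : IsLeast (Set.range rg) τmin)
    (κ : ℕ) (hκ₁ : 1 ≤ κ) (hκ₂ : tmax ^ (κ - 1) < d / (2 * Metric.diam Q)) :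
    ∀ x ∈ invariantSet f Q,
      qcH Set.univ ⇑Φ x ≤
        ENNReal.ofReal (2 * Metric.diam S / (τmin ^ (1 + κ) * δ)) := by
    classical
  intro x hx
  obtain ⟨i₁, hi₁⟩ := htmax.1
  obtain ⟨i₀, hi₀⟩ := hτmin.1
  haveI : Nonempty (Fin N) := ⟨i₀⟩
  have hrf_pos : ∀ i, 0 < rf i := fun i => (hf i).1
  have hrg_pos : ∀ i, 0 < rg i := fun i => (hg i).1
  have htmax_pos : 0 < tmax := hi₁ ▸ hrf_pos i₁
  have htmax_lt1 : tmax < 1 := hi₁ ▸ hrf i₁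
  have htmax_ge : ∀ i, rf i ≤ tmax := fun i => htmax.2 ⟨i, rfl⟩
  have hτmin_pos : 0 < τmin := hi₀ ▸ hrg_pos i₀
  have hτmin_le : ∀ i, τmin ≤ rg i := fun i => hτmin.2 ⟨i, rfl⟩
  -- positivity of d and diam Q
  have hfrac_pos : 0 < d / (2 * Metric.diam Q) := lt_trans (pow_pos htmax_pos _) hκ₂
  have hdiamQ2_pos : 0 < 2 * Metric.diam Q := by
    by_contra hcon
    push_neg at hcon
    have h0 : 2 * Metric.diam Q = 0 :=
      le_antisymm hcon (by positivity)
    rw [h0, div_zero] at hfrac_pos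
    exact lt_irrefl _ hfrac_pos
  have hdQ : 0 < Metric.diam Q := by linarith
  have hd_pos : 0 < d := by
    rcases div_pos_iff.mp hfrac_pos with ⟨h1, _⟩ | ⟨_, h2⟩
    · exact h1
    · linarith
  -- set abbreviations
  set UQ : Set (EuclideanSpace ℝ (Fin n)) := ⋃ i, f i '' Q with hUQdef
  set US : Set (EuclideanSpace ℝ (Fin n)) := ⋃ i, g i '' S with hUSdef
  set coreQ : Set (EuclideanSpace ℝ (Fin n)) := ⋃ i, f i '' closure Q with hcoreQdef
  set coreS : Set (EuclideanSpace ℝ (Fin n)) := ⋃ i, g i '' closure S with hcoreSdef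
  have hsetQ : setDist coreQ Qᶜ = 2 * d := by rw [hd]; ring
  have hQgap : ∀ a ∈ coreQ, ∀ b, b ∉ Q → 2 * d ≤ dist a b := by
    intro a ha b hb
    rw [← hsetQ]
    exact setDist_le_dist ha hb
  have hQc_ne : Set.Nonempty Qᶜ := by
    by_contra hcon
    rw [Set.not_nonempty_iff_eq_empty] at hcon
    have h1 : setDist coreQ Qᶜ = 0 := by
      rw [hcon]
      unfold setDist
      simp
    rw [hsetQ] at h1; linarith
  have hUQ_sub : UQ ⊆ Q := by
    rw [hUQdef]
    exact Set.iUnion_subset fun i => (Set.image_mono (f := f i) subset_closure).trans (hsepQ.1 i)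
  have hUS_sub : US ⊆ S := by
    rw [hUSdef]
    exact Set.iUnion_subset fun i => (Set.image_mono (f := g i) subset_closure).trans (hsepS.1 i)
  have hUQ_open : IsOpen UQ :=
    isOpen_iUnion fun i => by
      rw [← simHomeo_coe (hf i)]; exact (Homeomorph.isOpen_image _).mpr hQo
  have hUS_open : IsOpen US :=
    isOpen_iUnion fun i => by
      rw [← simHomeo_coe (hg i)]; exact (Homeomorph.isOpen_image _).mpr hSo
  -- coding cells of x
  have hcellx : ∀ k : ℕ, ∃ w : List (Fin N), w.length = k ∧
      x ∈ iterComp f w '' closure Q := by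
    intro k
    have hx' := Set.mem_iInter.mp hx k
    obtain ⟨w, hw⟩ := Set.mem_iUnion.mp hx'
    exact ⟨List.ofFn w, List.length_ofFn (f := w), hw⟩
  have hxQ : x ∈ closure Q := by
    obtain ⟨w, hwl, hwm⟩ := hcellx 0
    rw [List.length_eq_zero_iff.mp hwl] at hwm
    simpa [iterComp] using hwm
  have hQ_ne : Q.Nonempty := closure_nonempty_iff.mp ⟨x, hxQ⟩
  -- Φ maps UQ onto US
  obtain ⟨e, he⟩ := hφ_homeo
  have hΦΩ : Φ '' UQᶜ = USᶜ := by
    apply Set.Subset.antisymm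
    · rintro z ⟨p, hp, rfl⟩
      rw [hΦ_out p hp, ← he ⟨p, hp⟩]
      exact (e ⟨p, hp⟩).2
    · intro z hz
      refine ⟨e.symm ⟨z, hz⟩, (e.symm ⟨z, hz⟩).2, ?_⟩
      rw [hΦ_out _ (e.symm ⟨z, hz⟩).2, ← he (e.symm ⟨z, hz⟩)]
      rw [Homeomorph.apply_symm_apply]
  have hcore_img : Φ '' UQ = US := by
    apply compl_injective
    rw [← hΦΩ]
    have h1 := Equiv.image_compl Φ.toEquiv UQ
    simpa using h1.symm
  -- density of annular cells
  set D : Set (EuclideanSpace ℝ (Fin n)) :=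
    {p | ∃ w : List (Fin N), ∃ a, (a ∈ closure Q \ UQ) ∧ p = iterComp f w a} with hDdef
  have hcommD : ∀ p ∈ D, ∀ i, Φ (f i p) = g i (Φ p) := by
    rintro p ⟨w, a, ha, rfl⟩ i
    have h1 := hΦ_cell (i :: w) a ha
    have h2 := hΦ_cell w a ha
    rw [show iterComp f (i :: w) = f i ∘ iterComp f w from rfl] at h1
    rw [show iterComp g (i :: w) = g i ∘ iterComp g w from rfl] at h1
    simp only [Function.comp_apply] at h1
    rw [h1, h2]
  -- a frontier point of Q
  have hfrQ : (frontier Q).Nonempty := by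
    by_contra hcon
    rw [Set.not_nonempty_iff_eq_empty] at hcon
    have hclQ : closure Q = Q := by
      apply Set.Subset.antisymm _ subset_closure
      intro p hp
      by_contra hpQ
      have : p ∈ frontier Q := by
        rw [hQo.frontier_eq]; exact ⟨hp, hpQ⟩
      rw [hcon] at this; exact this
    obtain ⟨b, hb⟩ := hQc_ne
    obtain ⟨q0, hq0⟩ := hQ_ne
    have hpre : IsPreconnected (Set.univ : Set (EuclideanSpace ℝ (Fin n))) :=
      (convex_univ : Convex ℝ (Set.univ : Set (EuclideanSpace ℝ (Fin n)))).isPreconnected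
    have hcover : (Set.univ : Set (EuclideanSpace ℝ (Fin n))) ⊆ Q ∪ (closure Q)ᶜ := by
      intro p _
      by_cases hp : p ∈ Q
      · exact Or.inl hp
      · right; rw [hclQ]; exact hp
    obtain ⟨w, _, hw1, hw2⟩ := hpre Q (closure Q)ᶜ hQo isClosed_closure.isOpen_compl hcover
      ⟨q0, trivial, hq0⟩ ⟨b, trivial, by rw [hclQ]; exact hb⟩
    exact hw2 (subset_closure hw1)
  obtain ⟨bd, hbd⟩ := hfrQ
  have hbd_cl : bd ∈ closure Q := by rw [hQo.frontier_eq] at hbd; exact hbd.1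
  have hbd_nQ : bd ∉ Q := by rw [hQo.frontier_eq] at hbd; exact hbd.2
  have hbd_A : bd ∈ closure Q \ UQ := ⟨hbd_cl, fun h => hbd_nQ (hUQ_sub h)⟩
  have hDdense : closure Q ⊆ closure D := by
    intro p hp
    rw [Metric.mem_closure_iff]
    intro ε hε
    by_cases hall : ∀ k : ℕ, ∃ w : List (Fin N), w.length = k ∧
        p ∈ iterComp f w '' closure Q
    · obtain ⟨k, hk⟩ := exists_pow_lt_of_lt_one (div_pos hε hdQ) htmax_lt1
      obtain ⟨w, hwl, a, ha, hpa⟩ := hall k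
      refine ⟨iterComp f w bd, ⟨w, bd, hbd_A, rfl⟩, ?_⟩
      rw [← hpa, (iter_similarity hf w).2]
      have h1 : (w.map rf).prod ≤ tmax ^ k := by
        have := list_prod_le_pow htmax_ge (fun i => (hrf_pos i).le) w
        rwa [hwl] at this
      have h2 : dist a bd ≤ Metric.diam Q := by
        have := Metric.dist_le_diam_of_mem hQb.closure ha hbd_cl
        rwa [Metric.diam_closure] at this
      have h3 : tmax ^ k * Metric.diam Q < ε := (lt_div_iff₀ hdQ).mp hk
      have h4 : (0:ℝ) ≤ (w.map rf).prod := (iter_similarity hf w).1.le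
      nlinarith [dist_nonneg (x := a) (y := bd), pow_pos htmax_pos k]
    · push_neg at hall
      obtain ⟨k', hk'⟩ := hall
      have hex : ∃ kk : ℕ, ∀ w : List (Fin N), w.length = kk →
          p ∉ iterComp f w '' closure Q := by
        refine ⟨k', fun w hwl hmem => ?_⟩
        exact hk' w hwl hmem
      have hk₁spec := Nat.find_spec hex
      have hk₁ne : Nat.find hex ≠ 0 := by
        intro h0
        apply hk₁spec [] (by rw [h0]; rfl)
        simpa [iterComp] using hp
      have hk₀ := Nat.find_min hex (show Nat.find hex - 1 < Nat.find hex by omega)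
      push_neg at hk₀
      obtain ⟨w, hwl, hwmem⟩ := hk₀
      obtain ⟨a, ha, hpa⟩ := hwmem
      have haUQ : a ∉ UQ := by
        intro hmem
        rw [hUQdef] at hmem
        simp only [Set.mem_iUnion] at hmem
        obtain ⟨j, a', ha', hae⟩ := hmem
        apply hk₁spec (w ++ [j])
          (by rw [List.length_append, hwl, List.length_singleton]; omega)
        rw [iterComp_append, iterComp_singleton]
        refine ⟨a', subset_closure ha', ?_⟩
        simp only [Function.comp_apply]
        rw [hae, hpa]
      exact ⟨p, ⟨w, a, ⟨ha, haUQ⟩, hpa.symm⟩, by simpa [dist_self] using hε⟩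
  -- key commutation relation on closure Q
  have hΦfi : ∀ p ∈ closure Q, ∀ i, Φ (f i p) = g i (Φ p) := by
    intro p hp i
    have heq : Set.EqOn (fun z => Φ (f i z)) (fun z => g i (Φ z)) (closure D) := by
      apply Set.EqOn.closure
      · intro z hz
        exact hcommD z hz i
      · exact Φ.continuous.comp (sim_continuous (hf i))
      · exact (sim_continuous (hg i)).comp Φ.continuous
    exact heq (hDdense hp)
  have hΦw : ∀ (w : List (Fin N)) (p), p ∈ closure Q →
      Φ (iterComp f w p) = iterComp g w (Φ p) := by
    intro w
    induction w with
    | nil => intro p _; rfl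
    | cons i w ih =>
      intro p hp
      have h1 : iterComp f w p ∈ closure Q := cell_subset hsepQ.1 w ⟨p, hp, rfl⟩
      show Φ (f i (iterComp f w p)) = g i (iterComp g w (Φ p))
      rw [hΦfi _ h1 i, ih p hp]
  -- image of cells in the S-core
  have hcoreS_comp : IsCompact coreS := by
    rw [hcoreSdef]
    exact isCompact_iUnion fun i => (hSb.isCompact_closure).image (sim_continuous (hg i))
  have hcoreS_subS : coreS ⊆ S := by
    rw [hcoreSdef]
    exact Set.iUnion_subset fun i => hsepS.1 i
  have himg5 : ∀ j, Φ '' (f j '' closure Q) ⊆ coreS := by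
    intro j
    have hstep1 : Φ '' (f j '' closure Q) ⊆ Φ '' closure (f j '' Q) :=
      Set.image_mono (image_closure_subset_closure_image (sim_continuous (hf j)))
    have hstep2 : Φ '' closure (f j '' Q) = closure (Φ '' (f j '' Q)) := Φ.image_closure _
    have hstep3 : closure (Φ '' (f j '' Q)) ⊆ closure US := by
      apply closure_mono
      have h1 : f j '' Q ⊆ UQ := by rw [hUQdef]; exact Set.subset_iUnion (fun i => f i '' Q) j
      rw [← hcore_img]
      exact Set.image_mono h1
    have hstep4 : closure US ⊆ coreS := by
      apply closure_minimal
      · rw [hUSdef, hcoreSdef]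
        exact Set.iUnion_mono fun i => Set.image_mono subset_closure
      · rw [hcoreSdef]
        exact isClosed_iUnion_of_finite fun i =>
          ((hSb.isCompact_closure).image (sim_continuous (hg i))).isClosed
    calc Φ '' (f j '' closure Q) ⊆ Φ '' closure (f j '' Q) := hstep1
      _ = closure (Φ '' (f j '' Q)) := hstep2
      _ ⊆ closure US := hstep3
      _ ⊆ coreS := hstep4
  -- S is nonempty, Sᶜ is nonempty, δ > 0
  have hS_ne : S.Nonempty := by
    obtain ⟨q0, hq0⟩ := hQ_ne
    have h1 : Φ (f i₀ q0) ∈ US := by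
      rw [← hcore_img]
      exact ⟨f i₀ q0, by rw [hUQdef]; exact Set.mem_iUnion.mpr ⟨i₀, q0, hq0, rfl⟩, rfl⟩
    exact ⟨Φ (f i₀ q0), hUS_sub h1⟩
  have hSc_ne : Set.Nonempty Sᶜ := by
    by_contra hcon
    rw [Set.not_nonempty_iff_eq_empty, compl_empty_iff] at hcon
    obtain ⟨b, hb⟩ := hQc_ne
    obtain ⟨a, haQ⟩ := hQ_ne
    have hab : b - a ≠ 0 := sub_ne_zero.mpr (fun h => hb (h ▸ haQ))
    obtain ⟨R, hR⟩ := hSb.subset_closedBall a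
    set z := a + (|R| + 1) • ‖b - a‖⁻¹ • (b - a) with hzdef
    have hz : z ∈ Metric.closedBall a R := hR (by rw [hcon]; trivial)
    rw [Metric.mem_closedBall, dist_eq_norm] at hz
    have hnz : ‖z - a‖ = |R| + 1 := by
      rw [hzdef]
      rw [add_sub_cancel_left, norm_smul, norm_smul, norm_inv, norm_norm]
      rw [Real.norm_of_nonneg (by positivity)]
      rw [inv_mul_eq_div, div_self (norm_ne_zero_iff.mpr hab), mul_one]
    rw [hnz] at hz
    have := abs_nonneg R
    have := le_abs_self R
    linarith
  have hsetS : setDist coreS Sᶜ = 2 * δ := by rw [hδ]; ring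
  have hcoreS_ne : coreS.Nonempty := by
    obtain ⟨s0, hs0⟩ := hS_ne
    exact ⟨g i₀ s0, by rw [hcoreSdef]; exact Set.mem_iUnion.mpr ⟨i₀, s0, subset_closure hs0, rfl⟩⟩
  have hδ_pairs : ∀ a ∈ coreS, ∀ b, b ∉ S → 2 * δ ≤ dist a b := by
    intro a ha b hb
    rw [← hsetS]
    exact setDist_le_dist ha hb
  have hδ_pos : 0 < δ := by
    obtain ⟨c, hc_pos, hc⟩ := compact_closed_gap hcoreS_comp hcoreS_ne
      (isClosed_compl_iff.mpr hSo)
      (Set.disjoint_left.mpr fun z hz hzc => hzc (hcoreS_subS hz))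
    have h1 : c ≤ setDist coreS Sᶜ := le_setDist (hcoreS_ne.prod hSc_ne) hc
    rw [hsetS] at h1
    linarith
  -- collar lemma
  obtain ⟨ε, hε_pos, hcompat⟩ := hφ_compat
  have hsep_c : ∀ j : Fin N, ∃ c : ℝ, 0 < c ∧ (j ≠ i₀ →
      ∀ a ∈ f i₀ '' closure Q, ∀ b ∈ f j '' closure Q, c ≤ dist a b) := by
    intro j
    by_cases hj : j = i₀
    · exact ⟨1, one_pos, fun h => absurd hj h⟩
    · obtain ⟨c, hc1, hc2⟩ := compact_closed_gap
        ((hQb.isCompact_closure).image (sim_continuous (hf i₀)))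
        ((closure_nonempty_iff.mpr hQ_ne).image _)
        ((hQb.isCompact_closure).image (sim_continuous (hf j))).isClosed
        (hsepQ.2 i₀ j (fun h => hj h.symm))
      exact ⟨c, hc1, fun _ => hc2⟩
  choose cc hcc_pos hcc_gap using hsep_c
  have hFinNne : (Finset.univ : Finset (Fin N)).Nonempty := Finset.univ_nonempty
  set cmin := Finset.univ.inf' hFinNne cc with hcmindef
  have hcmin_pos : 0 < cmin := by
    obtain ⟨j2, _, hj2⟩ := Finset.exists_mem_eq_inf' hFinNne cc
    rw [hcmindef, hj2]
    exact hcc_pos j2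
  have hcmin_le : ∀ j, cmin ≤ cc j := fun j => Finset.inf'_le cc (Finset.mem_univ j)
  set ε' := min ε (cmin / (2 * rf i₀ + 2)) with hε'def
  have hε'_pos : 0 < ε' :=
    lt_min hε_pos (div_pos hcmin_pos (by nlinarith [hrf_pos i₀]))
  have hcollar : ∀ p, p ∉ Q → infDist p Q ≤ ε' → Φ p ∉ S := by
    intro p hpQ hpd hS
    have hpUQ : p ∉ UQ := fun h => hpQ (hUQ_sub h)
    have hinf : infDist p Q < 2 * ε' := lt_of_le_of_lt hpd (by linarith)
    obtain ⟨q, hqQ, hq⟩ := (Metric.infDist_lt_iff hQ_ne).mp hinf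
    have hfp_notin : f i₀ p ∉ UQ := by
      intro hmem
      rw [hUQdef] at hmem
      simp only [Set.mem_iUnion] at hmem
      obtain ⟨j, a, haQ, hfa⟩ := hmem
      by_cases hj : j = i₀
      · subst hj
        exact hpQ ((sim_injective (hf j) hfa) ▸ haQ)
      · have h1 : cc j ≤ dist (f i₀ q) (f i₀ p) := by
          apply hcc_gap j hj _ ⟨q, subset_closure hqQ, rfl⟩
          exact ⟨a, subset_closure haQ, hfa⟩
        have h2 : dist (f i₀ q) (f i₀ p) = rf i₀ * dist q p := (hf i₀).2 q p
        have h3 : dist q p < 2 * ε' := by rw [dist_comm]; exact hq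
        have h4 : ε' ≤ cmin / (2 * rf i₀ + 2) := min_le_right _ _
        have h5 := hcmin_le j
        have h6 : (0:ℝ) < 2 * rf i₀ + 2 := by nlinarith [hrf_pos i₀]
        have h4' : ε' * (2 * rf i₀ + 2) ≤ cmin := (le_div_iff₀ h6).mp h4
        have h7 := mul_lt_mul_of_pos_left h3 (hrf_pos i₀)
        nlinarith [hε'_pos]
    have hcomm := hcompat p hpQ (le_trans hpd (min_le_left _ _)) i₀
    have hΦp : Φ p = φ p := hΦ_out p hpUQ
    have hΦfp : Φ (f i₀ p) = φ (f i₀ p) := hΦ_out _ hfp_notin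
    have hkey : Φ (f i₀ p) = g i₀ (Φ p) := by rw [hΦfp, hcomm, hΦp]
    have hmem2 : g i₀ (Φ p) ∈ US := by
      rw [hUSdef]
      exact Set.mem_iUnion.mpr ⟨i₀, Φ p, hS, rfl⟩
    rw [← hcore_img] at hmem2
    obtain ⟨z, hzUQ, hz⟩ := hmem2
    have hzeq : z = f i₀ p := Φ.injective (by rw [hz, hkey])
    exact hfp_notin (hzeq ▸ hzUQ)
  -- Φ(Q) avoids the frontier of S
  have hgS_open : ∀ i : Fin N, IsOpen (g i '' S) := fun i => by
    rw [← simHomeo_coe (hg i)]; exact (Homeomorph.isOpen_image _).mpr hSo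
  have hfrontS : ∀ p ∈ Q, Φ p ∉ frontier S := by
    intro p hp hfr
    have hkey : Φ (f i₀ p) = g i₀ (Φ p) := hΦfi p (subset_closure hp) i₀
    have h1 : g i₀ (Φ p) ∈ frontier (g i₀ '' S) := by
      have h2 := (simHomeo (hg i₀)).image_frontier S
      rw [simHomeo_coe] at h2
      rw [← h2]
      exact ⟨Φ p, hfr, rfl⟩
    have h2 : g i₀ (Φ p) ∈ frontier US := by
      rw [(hgS_open i₀).frontier_eq] at h1
      obtain ⟨h1a, h1b⟩ := h1
      rw [hUS_open.frontier_eq]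
      constructor
      · apply closure_mono _ h1a
        rw [hUSdef]
        exact Set.subset_iUnion (fun i => g i '' S) i₀
      · intro hmem
        rw [hUSdef] at hmem
        simp only [Set.mem_iUnion] at hmem
        obtain ⟨j, hj⟩ := hmem
        by_cases hji : j = i₀
        · subst hji; exact h1b hj
        · have hcl : g i₀ (Φ p) ∈ g i₀ '' closure S := by
            have h3 := (simHomeo (hg i₀)).image_closure S
            rw [simHomeo_coe] at h3
            rw [h3]
            exact h1a
          have hj' : g i₀ (Φ p) ∈ g j '' closure S :=
            Set.image_mono subset_closure hj
          exact Set.disjoint_left.mp (hsepS.2 i₀ j (fun h => hji h.symm)) hcl hj'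
    have h3 : frontier US = ⇑Φ '' frontier UQ := by
      rw [Φ.image_frontier, hcore_img]
    rw [h3] at h2
    obtain ⟨z, hzfr, hz⟩ := h2
    have hzeq : z = f i₀ p := Φ.injective (by rw [hz, hkey])
    rw [hzeq] at hzfr
    rw [hUQ_open.frontier_eq] at hzfr
    apply hzfr.2
    rw [hUQdef]
    exact Set.mem_iUnion.mpr ⟨i₀, p, hp, rfl⟩
  -- the 2δ-neighbourhood of the S-core is contained in Φ(Q)
  have hYopen : IsOpen (⇑Φ '' Q) := (Homeomorph.isOpen_image Φ).mpr hQo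
  have hfrY : frontier (⇑Φ '' Q) = ⇑Φ '' frontier Q := (Φ.image_frontier Q).symm
  have hfr_notS : ∀ w ∈ frontier (⇑Φ '' Q), w ∉ S := by
    intro w hw
    rw [hfrY] at hw
    obtain ⟨pb, hpb, rfl⟩ := hw
    have hpbQ : pb ∉ Q := by rw [hQo.frontier_eq] at hpb; exact hpb.2
    have hpbcl : pb ∈ closure Q := by rw [hQo.frontier_eq] at hpb; exact hpb.1
    apply hcollar pb hpbQ
    rw [infDist_zero_of_mem_closure hpbcl]
    exact hε'_pos.le
  have hNsub : ∀ z, infDist z coreS < 2 * δ → z ∈ ⇑Φ '' Q := by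
    intro z hz
    obtain ⟨c, hcmem, hcd⟩ := (Metric.infDist_lt_iff hcoreS_ne).mp hz
    rw [hcoreSdef] at hcmem
    simp only [Set.mem_iUnion] at hcmem
    obtain ⟨i, hc_i⟩ := hcmem
    have hc_cl : c ∈ closure (g i '' S) := by
      have h3 := (simHomeo (hg i)).image_closure S
      rw [simHomeo_coe] at h3
      rw [← h3]
      exact hc_i
    obtain ⟨c', hc'_mem, hc'_d⟩ :=
      Metric.mem_closure_iff.mp hc_cl (2 * δ - dist z c) (by linarith)
    have hzc' : dist z c' < 2 * δ := by
      calc dist z c' ≤ dist z c + dist c c' := dist_triangle _ _ _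
        _ < 2 * δ := by linarith
    have hc'core : c' ∈ coreS := by
      rw [hcoreSdef]
      exact Set.mem_iUnion.mpr ⟨i, Set.image_mono subset_closure hc'_mem⟩
    have hc'Y : c' ∈ ⇑Φ '' Q := by
      have h1 : c' ∈ US := by
        rw [hUSdef]; exact Set.mem_iUnion.mpr ⟨i, hc'_mem⟩
      rw [← hcore_img] at h1
      exact Set.image_mono hUQ_sub h1
    have hseg_S : segment ℝ z c' ⊆ S := by
      intro w hw
      have hwball : w ∈ Metric.closedBall c' (dist z c') :=
        (convex_closedBall c' (dist z c')).segment_subset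
          (Metric.mem_closedBall.mpr (le_refl _))
          (Metric.mem_closedBall_self dist_nonneg) hw
      by_contra hwS
      have h1 := hδ_pairs c' hc'core w hwS
      rw [Metric.mem_closedBall] at hwball
      rw [dist_comm] at h1
      linarith
    by_contra hzY
    have hcover : segment ℝ z c' ⊆ (⇑Φ '' Q) ∪ (closure (⇑Φ '' Q))ᶜ := by
      intro w hw
      by_cases h1 : w ∈ ⇑Φ '' Q
      · exact Or.inl h1
      · right
        intro hcl
        have hwfr : w ∈ frontier (⇑Φ '' Q) :=
          ⟨hcl, fun hint => h1 (by rwa [hYopen.interior_eq] at hint)⟩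
        exact hfr_notS w hwfr (hseg_S hw)
    have hzv : z ∈ (closure (⇑Φ '' Q))ᶜ := by
      intro hcl
      have hzfr : z ∈ frontier (⇑Φ '' Q) :=
        ⟨hcl, fun hint => hzY (by rwa [hYopen.interior_eq] at hint)⟩
      exact hfr_notS z hzfr (hseg_S (left_mem_segment ℝ z c'))
    obtain ⟨w, _, hw1, hw2⟩ := (convex_segment z c').isPreconnected (⇑Φ '' Q)
      (closure (⇑Φ '' Q))ᶜ hYopen isClosed_closure.isOpen_compl hcover
      ⟨c', right_mem_segment ℝ z c', hc'Y⟩ ⟨z, left_mem_segment ℝ z c', hzv⟩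
    exact hw2 (subset_closure hw1)
  -- coding words and the limsup estimate
  choose v hvlen hvmem using hcellx
  have hcoh : ∀ a b : ℕ, a ≤ b → v a = (v b).take a := by
    intro a b hab
    have h1 := cell_take_coherence hf hsepQ (v a) x (v b) (hvmem a) (hvmem b)
      (by rw [hvlen, hvlen]; exact hab)
    rwa [hvlen] at h1
  have hstep : ∀ j : ℕ, ∃ i : Fin N, v (j+1) = v j ++ [i] := by
    intro j
    have h1 := hcoh j (j+1) (Nat.le_succ j)
    have h2 : j < (v (j+1)).length := by rw [hvlen]; omega
    refine ⟨(v (j+1))[j]'h2, ?_⟩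
    have h3 := List.take_concat_get' (v (j+1)) j h2
    rw [← h1] at h3
    rw [h3]
    exact (List.take_of_length_le (by rw [hvlen])).symm
  have htauQ : ∀ w : List (Fin N), 0 < (w.map rf).prod := fun w => (iter_similarity hf w).1
  have htauS : ∀ w : List (Fin N), 0 < (w.map rg).prod := fun w => (iter_similarity hg w).1
  have hdiamS0 : (0:ℝ) ≤ Metric.diam S := Metric.diam_nonneg
  unfold qcH
  refine Filter.limsup_le_of_le (by isBoundedDefault) ?_
  filter_upwards [Ioo_mem_nhdsGT_of_mem
    (show (0:ℝ) ∈ Set.Ico (0:ℝ) (2*d) from ⟨le_refl 0, by linarith⟩)]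
  intro r hr
  obtain ⟨hr0, hr2d⟩ := hr
  have hPex : ∃ jj : ℕ, 2 * d * ((v jj).map rf).prod ≤ r := by
    obtain ⟨j, hj⟩ := exists_pow_lt_of_lt_one
      (div_pos hr0 (by linarith : (0:ℝ) < 2*d)) htmax_lt1
    refine ⟨j, ?_⟩
    have h1 : ((v j).map rf).prod ≤ tmax ^ j := by
      have h2 := list_prod_le_pow htmax_ge (fun i => (hrf_pos i).le) (v j)
      rwa [hvlen] at h2
    rw [lt_div_iff₀ (by linarith : (0:ℝ) < 2*d)] at hj
    nlinarith [hd_pos]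
  have hk₁spec : 2 * d * ((v (Nat.find hPex)).map rf).prod ≤ r := Nat.find_spec hPex
  have hk₁ne : Nat.find hPex ≠ 0 := by
    intro h0
    rw [h0] at hk₁spec
    have hv0 : v 0 = [] := List.length_eq_zero_iff.mp (hvlen 0)
    rw [hv0] at hk₁spec
    simp only [List.map_nil, List.prod_nil, mul_one] at hk₁spec
    linarith
  set k := Nat.find hPex - 1 with hkdef
  have hks : k + 1 = Nat.find hPex := by omega
  have hk : r < 2 * d * ((v k).map rf).prod :=
    not_le.mp (Nat.find_min hPex (by omega))
  have hk1 : 2 * d * ((v (k+1)).map rf).prod ≤ r := by rw [hks]; exact hk₁spec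
  set m := k + 1 + κ with hmdef
  obtain ⟨ik, hik⟩ := hstep k
  obtain ⟨im, him⟩ := hstep m
  have hxk : x ∈ iterComp f (v k) '' (f ik '' closure Q) := by
    have h1 := hvmem (k+1)
    rw [hik, iterComp_append, iterComp_singleton, Set.image_comp] at h1
    exact h1
  have hxm : x ∈ iterComp f (v m) '' (f im '' closure Q) := by
    have h1 := hvmem (m+1)
    rw [him, iterComp_append, iterComp_singleton, Set.image_comp] at h1
    exact h1
  -- upper bound for linDil
  have hupper : linDil Set.univ (⇑Φ) x r ≤
      ENNReal.ofReal (((v k).map rg).prod * Metric.diam S) := by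
    rw [linDil]
    apply iSup₂_le
    intro y hy
    have hyd : dist x y ≤ r := hy.2
    obtain ⟨x', hx'm, hx'e⟩ := hxk
    obtain ⟨y', hy'e⟩ := sim_surjective (iter_similarity hf (v k)) y
    have hdist_xy : dist x y = ((v k).map rf).prod * dist x' y' := by
      rw [← hx'e, ← hy'e, (iter_similarity hf (v k)).2]
    have hx'core : x' ∈ coreQ := by
      rw [hcoreQdef]; exact Set.mem_iUnion.mpr ⟨ik, hx'm⟩
    have hx'y' : dist x' y' < 2 * d := by
      have hp := htauQ (v k)
      rw [hdist_xy] at hyd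
      nlinarith
    have hy'Q : y' ∈ Q := by
      by_contra hcon
      have h1 := hQgap x' hx'core y' hcon
      linarith
    have hsegQ : segment ℝ x' y' ⊆ Q := by
      intro w hw
      have hwball : w ∈ Metric.closedBall x' (dist y' x') :=
        (convex_closedBall x' (dist y' x')).segment_subset
          (Metric.mem_closedBall_self dist_nonneg)
          (Metric.mem_closedBall.mpr (le_refl _)) hw
      by_contra hwQ
      have h1 := hQgap x' hx'core w hwQ
      rw [Metric.mem_closedBall] at hwball
      rw [dist_comm y' x'] at hwball
      rw [← dist_comm w x'] at h1
      linarith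
    have hsegS : ⇑Φ '' segment ℝ x' y' ⊆ closure S := by
      by_contra hcon
      obtain ⟨z0, hz0C, hz0n⟩ := Set.not_subset.mp hcon
      have hpre := (convex_segment x' y').isPreconnected.image ⇑Φ
        Φ.continuous.continuousOn
      have hcover : ⇑Φ '' segment ℝ x' y' ⊆ S ∪ (closure S)ᶜ := by
        rintro w ⟨pw, hpw, rfl⟩
        by_cases h1 : Φ pw ∈ S
        · exact Or.inl h1
        · right
          intro hcl
          have h2 : Φ pw ∈ frontier S := by rw [hSo.frontier_eq]; exact ⟨hcl, h1⟩
          exact hfrontS pw (hsegQ hpw) h2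
      have hS1 : (⇑Φ '' segment ℝ x' y' ∩ S).Nonempty := by
        refine ⟨Φ x', ⟨x', left_mem_segment ℝ x' y', rfl⟩, ?_⟩
        exact hcoreS_subS (himg5 ik ⟨x', hx'm, rfl⟩)
      obtain ⟨w, _, hw1, hw2⟩ := hpre S (closure S)ᶜ hSo isClosed_closure.isOpen_compl
        hcover hS1 ⟨z0, hz0C, hz0n⟩
      exact hw2 (subset_closure hw1)
    have hΦx : Φ x = iterComp g (v k) (Φ x') := by
      rw [← hx'e]; exact hΦw (v k) x' (subset_closure (hsepQ.1 ik hx'm))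
    have hΦy : Φ y = iterComp g (v k) (Φ y') := by
      rw [← hy'e]; exact hΦw (v k) y' (subset_closure hy'Q)
    rw [edist_dist]
    apply ENNReal.ofReal_le_ofReal
    rw [hΦx, hΦy, (iter_similarity hg (v k)).2]
    have hmem1 : Φ x' ∈ closure S := hsegS ⟨x', left_mem_segment ℝ x' y', rfl⟩
    have hmem2 : Φ y' ∈ closure S := hsegS ⟨y', right_mem_segment ℝ x' y', rfl⟩
    have hdd : dist (Φ x') (Φ y') ≤ Metric.diam S := by
      have h1 := Metric.dist_le_diam_of_mem hSb.closure hmem1 hmem2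
      rwa [Metric.diam_closure] at h1
    exact mul_le_mul_of_nonneg_left hdd (htauS (v k)).le
  -- cell at level m is smaller than r
  have harith : ((v m).map rf).prod * Metric.diam Q < r := by
    have hvk1 : v (k+1) = (v m).take (k+1) := hcoh (k+1) m (by omega)
    have hsplit : v m = v (k+1) ++ (v m).drop (k+1) := by
      rw [hvk1, List.take_append_drop]
    have hlen_drop : ((v m).drop (k+1)).length = κ := by
      rw [List.length_drop, hvlen]; omega
    have hprod : ((v m).map rf).prod =
        ((v (k+1)).map rf).prod * (((v m).drop (k+1)).map rf).prod := by
      conv_lhs => rw [hsplit]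
      rw [List.map_append, List.prod_append]
    have hdropbound : (((v m).drop (k+1)).map rf).prod ≤ tmax ^ κ := by
      have h1 := list_prod_le_pow htmax_ge (fun i => (hrf_pos i).le) ((v m).drop (k+1))
      rwa [hlen_drop] at h1
    have htm1 : tmax ^ κ ≤ tmax ^ (κ - 1) :=
      pow_le_pow_of_le_one htmax_pos.le htmax_lt1.le (by omega)
    have hκd : tmax ^ (κ-1) * (2 * Metric.diam Q) < d := by
      rw [lt_div_iff₀ hdiamQ2_pos] at hκ₂
      exact hκ₂
    have hp1 := htauQ (v (k+1))
    have hp2 := htauQ ((v m).drop (k+1))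
    have hq1 : ((v m).map rf).prod ≤ ((v (k+1)).map rf).prod * tmax ^ (κ-1) := by
      rw [hprod]
      exact mul_le_mul_of_nonneg_left (le_trans hdropbound htm1) hp1.le
    have hq2 : ((v (k+1)).map rf).prod * (tmax ^ (κ-1) * (2 * Metric.diam Q)) <
        ((v (k+1)).map rf).prod * d := mul_lt_mul_of_pos_left hκd hp1
    nlinarith [htauQ (v m), pow_pos htmax_pos (κ-1)]
  have hynotcell : ∀ y, r ≤ dist x y → y ∉ iterComp f (v m) '' closure Q := by
    intro y hry hymem
    obtain ⟨b, hb, hbe⟩ := hymem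
    obtain ⟨x'', hx''m, hx''e⟩ := hxm
    have hx''cl : x'' ∈ closure Q := subset_closure (hsepQ.1 im hx''m)
    have h1 : dist x y = ((v m).map rf).prod * dist x'' b := by
      rw [← hx''e, ← hbe, (iter_similarity hf (v m)).2]
    have hdb : dist x'' b ≤ Metric.diam Q := by
      have h2 := Metric.dist_le_diam_of_mem hQb.closure hx''cl hb
      rwa [Metric.diam_closure] at h2
    nlinarith [htauQ (v m)]
  -- lower bound for linCon
  have hlower : ENNReal.ofReal (((v m).map rg).prod * (2*δ)) ≤
      linCon Set.univ (⇑Φ) x r := by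
    rw [linCon]
    apply le_iInf₂
    intro y hy
    have hry : r ≤ dist x y := hy.2
    obtain ⟨x'', hx''m, hx''e⟩ := hxm
    have hx''cl : x'' ∈ closure Q := subset_closure (hsepQ.1 im hx''m)
    obtain ⟨z, hze⟩ := sim_surjective (iter_similarity hg (v m)) (Φ y)
    have hzfar : ¬ (infDist z coreS < 2*δ) := by
      intro hcon
      obtain ⟨p, hpQ, hpe⟩ := hNsub z hcon
      have h1 : Φ y = Φ (iterComp f (v m) p) := by
        rw [hΦw (v m) p (subset_closure hpQ), hpe, hze]
      have h2 : y = iterComp f (v m) p := Φ.injective h1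
      exact (hynotcell y hry) ⟨p, subset_closure hpQ, h2.symm⟩
    push_neg at hzfar
    have hx''S : Φ x'' ∈ coreS := himg5 im ⟨x'', hx''m, rfl⟩
    have hzd : 2*δ ≤ dist z (Φ x'') := le_trans hzfar (infDist_le_dist_of_mem hx''S)
    have hΦx : Φ x = iterComp g (v m) (Φ x'') := by
      rw [← hx''e]; exact hΦw (v m) x'' hx''cl
    rw [edist_dist]
    apply ENNReal.ofReal_le_ofReal
    rw [hΦx, ← hze, (iter_similarity hg (v m)).2]
    have h3 : 2*δ ≤ dist (Φ x'') z := by rw [dist_comm]; exact hzd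
    exact mul_le_mul_of_nonneg_left h3 (htauS (v m)).le
  -- combine
  have hτmk : ((v k).map rg).prod * τmin ^ (1+κ) ≤ ((v m).map rg).prod := by
    have hvk : v k = (v m).take k := hcoh k m (by omega)
    have hsplit : v m = v k ++ (v m).drop k := by rw [hvk, List.take_append_drop]
    have hlen : ((v m).drop k).length = 1 + κ := by rw [List.length_drop, hvlen]; omega
    have hprod : ((v m).map rg).prod =
        ((v k).map rg).prod * (((v m).drop k).map rg).prod := by
      conv_lhs => rw [hsplit]
      rw [List.map_append, List.prod_append]
    rw [hprod]
    apply mul_le_mul_of_nonneg_left _ (htauS (v k)).le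
    have h1 := pow_le_list_prod hτmin_le hτmin_pos.le ((v m).drop k)
    rwa [hlen] at h1
  have hBpos : (0:ℝ) < ((v m).map rg).prod * (2*δ) :=
    mul_pos (htauS (v m)) (by linarith)
  calc linDil Set.univ (⇑Φ) x r / linCon Set.univ (⇑Φ) x r
      ≤ ENNReal.ofReal (((v k).map rg).prod * Metric.diam S) /
        ENNReal.ofReal (((v m).map rg).prod * (2*δ)) := ENNReal.div_le_div hupper hlower
    _ = ENNReal.ofReal ((((v k).map rg).prod * Metric.diam S) /
        (((v m).map rg).prod * (2*δ))) := (ENNReal.ofReal_div_of_pos hBpos).symm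
    _ ≤ ENNReal.ofReal (2 * Metric.diam S / (τmin ^ (1 + κ) * δ)) := by
        apply ENNReal.ofReal_le_ofReal
        rw [div_le_div_iff₀ hBpos (by positivity)]
        have h1 := mul_le_mul_of_nonneg_left hτmk (mul_nonneg hdiamS0 hδ_pos.le)
        nlinarith [htauS (v k), htauS (v m), pow_pos hτmin_pos (1+κ)]
end
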